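/- For every real λ and all x = (x₁,x₂), y = (y₁,y₂) ∈ ℝ²: e^{y₂ − y₁} · ∫_{-∞}^{∞} exp( −2π·i·u + (i·λ + 1/2)·((x₁−y₁) + (x₂−y₂)) − π·( e^{2(x₁−y₁)} + e^{2(x₂−y₂)} + u²·e^{2(x₂−y₁)} ) ) du = exp( (i·λ + 1/2)·(x₁−y₁) + (i·λ − 1/2)·(x₂−y₂) − π·( e^{2(x₁−y₁)} + e^{2(y₁−x₂)} + e^{2(x₂−y₂)} ) ). -/

import Mathlib

open MeasureTheory Complex Real

/-- The `GL(2,ℝ)` computation reducing the universal Baxter operator to the kernel of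
the Toda-chain Baxter operator `Q₀^{gl₂}`. -/
theorem gl2_universal_baxter_reduction (lam : ℝ) (x y : ℝ × ℝ) :
    (Real.exp (y.2 - y.1) : ℂ) *
      ∫ u : ℝ, Complex.exp (-2 * π * I * (u : ℂ) +
        (I * (lam : ℂ) + 1 / 2) * (((x.1 : ℂ) - (y.1 : ℂ)) + ((x.2 : ℂ) - (y.2 : ℂ))) -
        (π : ℂ) * (Real.exp (2 * (x.1 - y.1)) + Real.exp (2 * (x.2 - y.2)) +
          (u : ℂ) ^ 2 * Real.exp (2 * (x.2 - y.1)))) =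
    Complex.exp ((I * (lam : ℂ) + 1 / 2) * ((x.1 : ℂ) - (y.1 : ℂ)) +
      (I * (lam : ℂ) - 1 / 2) * ((x.2 : ℂ) - (y.2 : ℂ)) -
      (π : ℂ) * (Real.exp (2 * (x.1 - y.1)) + Real.exp (2 * (y.1 - x.2)) +
        Real.exp (2 * (x.2 - y.2)))) := by
  set s : ℝ := 2 * (x.2 - y.1) with hs
  set b : ℂ := -(π : ℂ) * Real.exp s with hb
  set c : ℂ := -2 * π * I with hc
  set d : ℂ := (I * (lam : ℂ) + 1 / 2) * (((x.1 : ℂ) - (y.1 : ℂ)) + ((x.2 : ℂ) - (y.2 : ℂ))) -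
      (π : ℂ) * (Real.exp (2 * (x.1 - y.1)) + Real.exp (2 * (x.2 - y.2))) with hd
  have hπ : (π : ℂ) ≠ 0 := Complex.ofReal_ne_zero.mpr Real.pi_ne_zero
  have hne : (Real.exp s : ℂ) ≠ 0 := Complex.ofReal_ne_zero.mpr (Real.exp_ne_zero s)
  have hbre : b.re < 0 := by
    have : b = ((-π * Real.exp s : ℝ) : ℂ) := by push_cast [hb]; ring
    rw [this, Complex.ofReal_re]
    have := Real.exp_pos s
    nlinarith [Real.pi_pos]
  have h1 : ∀ u : ℝ, (-2 * (π : ℂ) * I * (u : ℂ) +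
        (I * (lam : ℂ) + 1 / 2) * (((x.1 : ℂ) - (y.1 : ℂ)) + ((x.2 : ℂ) - (y.2 : ℂ))) -
        (π : ℂ) * (Real.exp (2 * (x.1 - y.1)) + Real.exp (2 * (x.2 - y.2)) +
          (u : ℂ) ^ 2 * Real.exp s)) = b * (u:ℂ)^2 + c * u + d := by
    intro u; simp only [hb, hc, hd]; ring
  rw [← hc] at h1; simp only [h1]
  rw [integral_cexp_quadratic hbre c d]
  have h2 : ((π : ℂ) / -b) = ((Real.exp (-s) : ℝ) : ℂ) := by
    rw [hb, neg_mul, neg_neg, div_mul_cancel_left₀ hπ, Real.exp_neg, Complex.ofReal_inv]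
  have h3 : ((π : ℂ) / -b) ^ (1/2 : ℂ) = ((Real.exp (-(s/2)) : ℝ) : ℂ) := by
    rw [h2, show ((1:ℂ)/2) = ((1/2 : ℝ) : ℂ) by norm_num,
      ← Complex.ofReal_cpow (Real.exp_nonneg _),
      Real.rpow_def_of_pos (Real.exp_pos _), Real.log_exp]
    norm_num
    congr 1
    ring
  have hcsq : c ^ 2 / (4 * b) = (π : ℂ) * Real.exp (-s) := by
    rw [hc, hb, Real.exp_neg, Complex.ofReal_inv]
    field_simp
    ring_nf
    simp [Complex.I_sq]
  rw [h3, hcsq, ← mul_assoc, ← Complex.ofReal_mul, ← Real.exp_add,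
    Complex.ofReal_exp, ← Complex.exp_add]
  have hes : Real.exp (2 * (y.1 - x.2)) = Real.exp (-s) := by rw [hs]; ring_nf
  rw [hes]
  congr 1
  simp only [hd, hs]
  push_cast
  ring
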